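/- arXiv:2408.05561 — 3 statements merged into one kernel-verified Lean document; each statement's English description precedes it below -/
import Mathlib

section
/- Let K be a field, R = K[x_1,…,x_n], and let I ⊆ R be a normally torsion-free square-free monomial ideal with minimal monomial generating set G(I) = {u_1,…,u_m}. Let S = R[x_{n+1},…,x_{n+m}] = K[x_1,…,x_{n+m}], let f be a square-free monomial dividing u_m, and set L = (u_1,…,u_{m−1})S + f x_{n+1}⋯x_{n+m} S. Assume f x_{n+1}⋯x_{n+m} ∉ 𝔭^2 for every minimal prime 𝔭 of L, and that the ideal (u_1,…,u_{m−1})S is normally torsion-free. Then L is normal; equivalently (since L is a square-free monomial ideal), for every integer s ≥ 1 and every monomial u ∈ S, if u^k ∈ L^{sk} for some integer k ≥ 1, then u ∈ L^s. -/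
open MvPolynomial

/-- An ideal is normally torsion-free if `Ass(R/I^k) ⊆ Ass(R/I)` for all `k ≥ 1`. -/
def IsNTF {R : Type*} [CommRing R] (I : Ideal R) : Prop :=
  ∀ k : ℕ, 1 ≤ k →
    associatedPrimes R (R ⧸ I ^ k) ⊆ associatedPrimes R (R ⧸ I)

set_option linter.unusedSectionVars false

open Pointwise

namespace Stmt13Aux

variable {K : Type*} [Field K] {σ : Type*} [Fintype σ] [DecidableEq σ]

/-- indicator exponent of a finset -/
noncomputable def chi (A : Finset σ) : σ →₀ ℕ := ∑ i ∈ A, Finsupp.single i 1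

lemma chi_apply (A : Finset σ) (l : σ) : chi A l = if l ∈ A then 1 else 0 := by
  rw [chi, Finset.sum_apply']
  simp [Finsupp.single_apply]

lemma chi_le_iff {A : Finset σ} {d : σ →₀ ℕ} : chi A ≤ d ↔ ∀ i ∈ A, d i ≠ 0 := by
  constructor
  · intro h i hi
    have := h i
    rw [chi_apply, if_pos hi] at this
    omega
  · intro h i
    rw [chi_apply]
    split
    · exact Nat.one_le_iff_ne_zero.mpr (h i ‹_›)
    · exact Nat.zero_le _

/-- the monomial ideal with exponent set `D` -/
noncomputable def mdl (D : Set (σ →₀ ℕ)) : Ideal (MvPolynomial σ K) :=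
  Ideal.span ((fun e => monomial e (1 : K)) '' D)

/-- the set of polynomials all of whose monomials are divisible by a monomial from `D`,
as an ideal -/
def mSub (D : Set (σ →₀ ℕ)) : Ideal (MvPolynomial σ K) where
  carrier := {f | ∀ d ∈ f.support, ∃ e ∈ D, e ≤ d}
  zero_mem' := by simp
  add_mem' := by
    intro a b ha hb d hd
    rcases Finset.mem_union.mp (MvPolynomial.support_add hd) with h | h
    exacts [ha d h, hb d h]
  smul_mem' := by
    intro c f hf d hd
    rw [smul_eq_mul] at hd
    rcases Finset.mem_add.mp (MvPolynomial.support_mul c f hd) with ⟨d1, h1, d2, h2, rfl⟩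
    obtain ⟨e, he, hle⟩ := hf d2 h2
    exact ⟨e, he, hle.trans le_add_self⟩

lemma mem_mdl {D : Set (σ →₀ ℕ)} {f : MvPolynomial σ K} :
    f ∈ (mdl D : Ideal (MvPolynomial σ K)) ↔ ∀ d ∈ f.support, ∃ e ∈ D, e ≤ d := by
  classical
  constructor
  · intro hf
    have : (mdl D : Ideal (MvPolynomial σ K)) ≤ mSub D := by
      rw [mdl, Ideal.span_le]
      rintro _ ⟨e, he, rfl⟩ d hd
      rw [MvPolynomial.support_monomial, if_neg (one_ne_zero)] at hd
      rw [Finset.mem_singleton] at hd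
      exact ⟨e, he, hd ▸ le_rfl⟩
    exact this hf
  · intro h
    rw [MvPolynomial.as_sum f]
    refine Ideal.sum_mem _ (fun d hd => ?_)
    obtain ⟨e, he, hle⟩ := h d hd
    have : monomial d (coeff d f) = monomial e (1 : K) * monomial (d - e) (coeff d f) := by
      rw [monomial_mul, one_mul, add_tsub_cancel_of_le hle]
    rw [this]
    exact Ideal.mul_mem_right _ _ (Ideal.subset_span ⟨e, he, rfl⟩)

lemma mdl_mul (D1 D2 : Set (σ →₀ ℕ)) :
    (mdl D1 * mdl D2 : Ideal (MvPolynomial σ K)) = mdl (D1 + D2) := by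
  rw [mdl, mdl, mdl, Ideal.span_mul_span']
  congr 1
  ext f
  constructor
  · rintro ⟨_, ⟨e1, he1, rfl⟩, _, ⟨e2, he2, rfl⟩, rfl⟩
    exact ⟨e1 + e2, Set.add_mem_add he1 he2, by simp [monomial_mul]⟩
  · rintro ⟨_, ⟨e1, he1, e2, he2, rfl⟩, rfl⟩
    exact ⟨monomial e1 1, ⟨e1, he1, rfl⟩, monomial e2 1, ⟨e2, he2, rfl⟩,
      by simp [monomial_mul]⟩

/-- iterated (pointwise) sumset power -/
def sumPow (D : Set (σ →₀ ℕ)) : ℕ → Set (σ →₀ ℕ)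
  | 0 => {0}
  | (t + 1) => D + sumPow D t

lemma mdl_pow (D : Set (σ →₀ ℕ)) (t : ℕ) :
    (mdl D : Ideal (MvPolynomial σ K)) ^ t = mdl (sumPow D t) := by
  induction t with
  | zero =>
    rw [pow_zero, sumPow, mdl]
    rw [Set.image_singleton]
    have : (monomial (0 : σ →₀ ℕ) (1:K)) = 1 := by
      rw [monomial_zero', C_1]
    rw [this, Ideal.span_singleton_one, Ideal.one_eq_top]
  | succ t ih =>
    rw [pow_succ, ih, mdl_mul, sumPow]
    rw [add_comm D (sumPow D t)]


/-- the monomial prime generated by the variables in `C` -/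
noncomputable def PC (C : Finset σ) : Ideal (MvPolynomial σ K) :=
  Ideal.span ((fun i => (X i : MvPolynomial σ K)) '' ↑C)

lemma PC_eq_mdl (C : Finset σ) :
    (PC C : Ideal (MvPolynomial σ K)) = mdl ((fun i => Finsupp.single i 1) '' ↑C) := by
  rw [PC, mdl, ← Set.image_comp]
  rfl

lemma mem_PC {C : Finset σ} {f : MvPolynomial σ K} :
    f ∈ (PC C : Ideal (MvPolynomial σ K)) ↔ ∀ d ∈ f.support, ∃ i ∈ C, d i ≠ 0 := by
  rw [PC_eq_mdl, mem_mdl]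
  constructor
  · intro h d hd
    obtain ⟨_, ⟨i, hi, rfl⟩, hle⟩ := h d hd
    refine ⟨i, hi, ?_⟩
    have := Finsupp.single_le_iff.mp hle
    omega
  · intro h d hd
    obtain ⟨i, hi, hne⟩ := h d hd
    exact ⟨Finsupp.single i 1, ⟨i, hi, rfl⟩, Finsupp.single_le_iff.mpr (by omega)⟩

lemma X_mem_PC {C : Finset σ} {i : σ} :
    (X i : MvPolynomial σ K) ∈ (PC C : Ideal (MvPolynomial σ K)) ↔ i ∈ C := by
  constructor
  · intro h
    rw [mem_PC] at h
    obtain ⟨l, hl, hne⟩ := h (Finsupp.single i 1) (by rw [support_X]; simp)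
    rw [Finsupp.single_apply] at hne
    split at hne
    · subst ‹i = l›; exact hl
    · omega
  · intro h
    exact Ideal.subset_span ⟨i, h, rfl⟩

lemma PC_mono {C1 C2 : Finset σ} (h : C1 ⊆ C2) :
    (PC C1 : Ideal (MvPolynomial σ K)) ≤ PC C2 :=
  Ideal.span_mono (Set.image_mono (by exact_mod_cast h))

/-- the algebra map killing the variables in `C` -/
noncomputable def killC (C : Finset σ) : MvPolynomial σ K →ₐ[K] MvPolynomial σ K :=
  aeval (fun i => if i ∈ C then 0 else X i)

lemma sub_killC_mem (C : Finset σ) (f : MvPolynomial σ K) :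
    f - killC C f ∈ (PC C : Ideal (MvPolynomial σ K)) := by
  induction f using MvPolynomial.induction_on with
  | C a => simp [killC]
  | add p q hp hq =>
    have : p + q - killC C (p + q) = (p - killC C p) + (q - killC C q) := by
      rw [map_add]; ring
    rw [this]
    exact Ideal.add_mem _ hp hq
  | mul_X p i hp =>
    rw [map_mul]
    have hXi : killC (K := K) C (X i) = if i ∈ C then 0 else X i := by
      simp [killC]
    by_cases hi : i ∈ C
    · rw [hXi, if_pos hi, mul_zero, sub_zero]
      exact Ideal.mul_mem_left _ p (X_mem_PC.mpr hi)
    · rw [hXi, if_neg hi]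
      have : p * X i - killC C p * X i = (p - killC C p) * X i := by ring
      rw [this]
      exact Ideal.mul_mem_right _ _ hp

lemma mem_PC_iff_killC {C : Finset σ} {f : MvPolynomial σ K} :
    f ∈ (PC C : Ideal (MvPolynomial σ K)) ↔ killC C f = 0 := by
  constructor
  · intro h
    have hle : (PC C : Ideal (MvPolynomial σ K)) ≤ RingHom.ker (killC C).toRingHom := by
      rw [PC, Ideal.span_le]
      rintro _ ⟨i, hi, rfl⟩
      rw [SetLike.mem_coe, RingHom.mem_ker]
      show killC C (X i) = 0
      rw [killC, aeval_X, if_pos (Finset.mem_coe.mp hi)]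
    exact hle h
  · intro h
    have := sub_killC_mem C f
    rwa [h, sub_zero] at this

lemma PC_prime (C : Finset σ) : (PC C : Ideal (MvPolynomial σ K)).IsPrime := by
  constructor
  · intro h
    have : (1 : MvPolynomial σ K) ∈ PC (K := K) C := h ▸ Submodule.mem_top
    rw [mem_PC_iff_killC, map_one] at this
    exact one_ne_zero this
  · intro x y hxy
    rw [mem_PC_iff_killC, map_mul] at hxy
    rcases mul_eq_zero.mp hxy with h | h
    · exact Or.inl (mem_PC_iff_killC.mpr h)
    · exact Or.inr (mem_PC_iff_killC.mpr h)

/-- the square-free monomial ideal whose generators are indexed by the edges in `E` -/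
noncomputable def idealOf (E : Finset (Finset σ)) : Ideal (MvPolynomial σ K) :=
  Ideal.span ((fun A => ∏ i ∈ A, (X i : MvPolynomial σ K)) '' ↑E)

lemma prod_X_eq (A : Finset σ) :
    (∏ i ∈ A, (X i : MvPolynomial σ K)) = monomial (chi A) 1 := by
  induction A using Finset.induction_on with
  | empty => simp [chi]
  | @insert a A h ih =>
    rw [Finset.prod_insert h, ih]
    have hc : chi (insert a A) = Finsupp.single a 1 + chi A := by
      rw [chi, chi, Finset.sum_insert h]
    rw [hc]
    show monomial (Finsupp.single a 1) (1 : K) * monomial (chi A) 1 = _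
    rw [monomial_mul, one_mul]

lemma idealOf_eq_mdl (E : Finset (Finset σ)) :
    (idealOf E : Ideal (MvPolynomial σ K)) = mdl (chi '' ↑E) := by
  have h : (fun A : Finset σ => ∏ i ∈ A, (X i : MvPolynomial σ K)) =
      (fun e => monomial e (1 : K)) ∘ chi := by
    funext A
    exact prod_X_eq A
  rw [idealOf, mdl, h, Set.image_comp]

/-- `C` is a vertex cover of the edge set `E` -/
def IsCover (E : Finset (Finset σ)) (C : Finset σ) : Prop :=
  ∀ A ∈ E, ∃ i ∈ A, i ∈ C

/-- `C` is a minimal vertex cover of the edge set `E` -/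
def MinCover (E : Finset (Finset σ)) (C : Finset σ) : Prop :=
  IsCover E C ∧ ∀ i ∈ C, ¬ IsCover E (C.erase i)

lemma isCover_mono {E : Finset (Finset σ)} {C1 C2 : Finset σ} (h : C1 ⊆ C2)
    (hc : IsCover E C1) : IsCover E C2 := by
  intro A hA
  obtain ⟨i, hiA, hiC⟩ := hc A hA
  exact ⟨i, hiA, h hiC⟩

lemma idealOf_le_PC {E : Finset (Finset σ)} {C : Finset σ} (h : IsCover E C) :
    (idealOf E : Ideal (MvPolynomial σ K)) ≤ PC C := by
  rw [idealOf, Ideal.span_le]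
  rintro _ ⟨A, hA, rfl⟩
  obtain ⟨i, hiA, hiC⟩ := h A hA
  rw [SetLike.mem_coe]
  show (∏ i ∈ A, (X i : MvPolynomial σ K)) ∈ PC C
  rw [← Finset.mul_prod_erase _ _ hiA]
  exact Ideal.mul_mem_right _ _ (X_mem_PC.mpr hiC)

lemma mem_idealOf_iff_forall_cover {E : Finset (Finset σ)} {f : MvPolynomial σ K} :
    f ∈ (idealOf E : Ideal (MvPolynomial σ K)) ↔
      ∀ C : Finset σ, IsCover E C → f ∈ (PC C : Ideal (MvPolynomial σ K)) := by
  constructor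
  · intro h C hC
    exact idealOf_le_PC hC h
  · intro h
    rw [idealOf_eq_mdl, mem_mdl]
    intro d hd
    by_contra hno
    push_neg at hno
    have hAll : ∀ A ∈ E, ¬ chi A ≤ d := by
      intro A hA
      exact hno (chi A) ⟨A, hA, rfl⟩
    set Cs : Finset σ := Finset.univ.filter (fun i => d i = 0) with hCs
    have hcov : IsCover E Cs := by
      intro A hA
      have := hAll A hA
      rw [chi_le_iff] at this
      push_neg at this
      obtain ⟨i, hiA, hi0⟩ := this
      exact ⟨i, hiA, Finset.mem_filter.mpr ⟨Finset.mem_univ i, hi0⟩⟩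
    have := mem_PC.mp (h Cs hcov) d hd
    obtain ⟨i, hiCs, hine⟩ := this
    exact hine (Finset.mem_filter.mp hiCs).2


lemma sumPow_single_sum {C : Finset σ} :
    ∀ {t : ℕ} {w : σ →₀ ℕ},
      w ∈ sumPow ((fun i => Finsupp.single i 1) '' ↑C) t → ∑ i ∈ C, w i = t := by
  intro t
  induction t with
  | zero =>
    intro w hw
    rw [sumPow, Set.mem_singleton_iff] at hw
    subst hw
    simp
  | succ t ih =>
    intro w hw
    rw [sumPow] at hw
    obtain ⟨x, ⟨i, hi, rfl⟩, y, hy, rfl⟩ := Set.mem_add.mp hw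
    show ∑ l ∈ C, ((Finsupp.single i 1 : σ →₀ ℕ) + y) l = t + 1
    have h1 : ∑ l ∈ C, ((Finsupp.single i 1 : σ →₀ ℕ) + y) l
        = (∑ l ∈ C, (Finsupp.single i 1) l) + ∑ l ∈ C, y l := by
      rw [← Finset.sum_add_distrib]
      exact Finset.sum_congr rfl fun l _ => Finsupp.add_apply _ _ _
    rw [h1, ih hy]
    have h2 : ∑ l ∈ C, (Finsupp.single i 1) l = 1 := by
      simp only [Finsupp.single_apply]
      rw [Finset.sum_ite_eq C i (fun _ => 1)]
      exact if_pos (Finset.mem_coe.mp hi)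
    omega

lemma cover_sum_ge {E : Finset (Finset σ)} {C : Finset σ} (hC : IsCover E C)
    {d : σ →₀ ℕ} {t k : ℕ} (hk : 0 < k)
    (h : (monomial d (1 : K)) ^ k ∈ (idealOf (K := K) E) ^ t) :
    t ≤ k * ∑ i ∈ C, d i := by
  classical
  have h1 : (monomial d (1 : K)) ^ k ∈ (PC C : Ideal (MvPolynomial σ K)) ^ t :=
    Ideal.pow_right_mono (idealOf_le_PC hC) t h
  rw [PC_eq_mdl, mdl_pow, monomial_pow, one_pow] at h1
  obtain ⟨w, hw, hle⟩ := mem_mdl.mp h1 (k • d)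
    (by rw [support_monomial, if_neg one_ne_zero]; exact Finset.mem_singleton_self _)
  have h2 : ∑ i ∈ C, w i = t := sumPow_single_sum hw
  have h3 : ∑ i ∈ C, w i ≤ ∑ i ∈ C, (k • d) i := Finset.sum_le_sum fun i _ => hle i
  have h4 : ∑ i ∈ C, (k • d) i = k * ∑ i ∈ C, d i := by
    rw [Finset.mul_sum]
    refine Finset.sum_congr rfl fun i _ => ?_
    rw [Finsupp.smul_apply, smul_eq_mul]
  omega

lemma exists_nat_decomp (C : Finset σ) (g : σ → ℕ) :
    ∀ t : ℕ, t ≤ ∑ i ∈ C, g i →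
      ∃ tt : σ → ℕ, (∀ i, tt i ≤ g i) ∧ ∑ i ∈ C, tt i = t := by
  intro t
  induction t with
  | zero => exact fun _ => ⟨fun _ => 0, fun _ => Nat.zero_le _, by simp⟩
  | succ t ih =>
    intro h
    obtain ⟨tt, htle, htsum⟩ := ih (Nat.le_of_succ_le h)
    have hex : ∃ i ∈ C, tt i < g i := by
      by_contra hno
      push_neg at hno
      have := Finset.sum_le_sum hno
      omega
    obtain ⟨i, hiC, hlt⟩ := hex
    refine ⟨Function.update tt i (tt i + 1), ?_, ?_⟩
    · intro j
      rcases eq_or_ne j i with rfl | hne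
      · rw [Function.update_self]; omega
      · rw [Function.update_of_ne hne]; exact htle j
    · rw [Finset.sum_update_of_mem hiC, Finset.sdiff_singleton_eq_erase]
      rw [← Finset.add_sum_erase _ tt hiC] at htsum
      omega

lemma prod_monomial (S : Finset σ) (g : σ → (σ →₀ ℕ)) :
    (∏ i ∈ S, monomial (g i) (1 : K)) = monomial (∑ i ∈ S, g i) 1 := by
  induction S using Finset.induction_on with
  | empty => rw [Finset.prod_empty, Finset.sum_empty, monomial_zero', C_1]
  | @insert a S ha ih =>
    rw [Finset.prod_insert ha, ih, Finset.sum_insert ha, monomial_mul, one_mul]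

lemma prod_pow_mem (I : Ideal (MvPolynomial σ K)) (tt : σ → ℕ) :
    ∀ (S : Finset σ) (f : σ → MvPolynomial σ K), (∀ i ∈ S, f i ∈ I) →
      (∏ i ∈ S, f i ^ tt i) ∈ I ^ (∑ i ∈ S, tt i) := by
  intro S
  induction S using Finset.induction_on with
  | empty =>
    intro f _
    rw [Finset.prod_empty, Finset.sum_empty, pow_zero, Ideal.one_eq_top]
    trivial
  | @insert a S ha ih =>
    intro f h
    rw [Finset.prod_insert ha, Finset.sum_insert ha, pow_add]
    exact Ideal.mul_mem_mul (Ideal.pow_mem_pow (h a (Finset.mem_insert_self a S)) _)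
      (ih f fun i hi => h i (Finset.mem_insert_of_mem hi))

theorem exists_witness {E : Finset (Finset σ)} {C0 : Finset σ} (hmin : MinCover E C0)
    {e : σ →₀ ℕ} {t : ℕ} (ht : t ≤ ∑ i ∈ C0, e i) :
    ∃ ω : σ →₀ ℕ, (∀ i ∈ C0, ω i = 0) ∧
      monomial ω (1 : K) * monomial e 1 ∈ (idealOf (K := K) E) ^ t := by
  classical
  have hA : ∀ i : σ, ∃ A : Finset σ, i ∈ C0 → A ∈ E ∧ A ∩ C0 = {i} := by
    intro i
    by_cases hi : i ∈ C0
    · have hnc := hmin.2 i hi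
      rw [IsCover] at hnc
      push_neg at hnc
      obtain ⟨A, hAE, hno⟩ := hnc
      refine ⟨A, fun _ => ⟨hAE, ?_⟩⟩
      obtain ⟨l0, hl0A, hl0C⟩ := hmin.1 A hAE
      have hl0 : l0 = i := by
        by_contra hne
        exact (hno l0 hl0A) (Finset.mem_erase.mpr ⟨hne, hl0C⟩)
      subst hl0
      ext l
      simp only [Finset.mem_inter, Finset.mem_singleton]
      constructor
      · rintro ⟨hlA, hlC⟩
        by_contra hne
        exact (hno l hlA) (Finset.mem_erase.mpr ⟨hne, hlC⟩)
      · rintro rfl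
        exact ⟨hl0A, hl0C⟩
    · exact ⟨∅, fun h => absurd h hi⟩
  choose A hA using hA
  obtain ⟨tt, httle, httsum⟩ := exists_nat_decomp C0 (fun i => e i) t ht
  set ω : σ →₀ ℕ := ∑ i ∈ C0, tt i • chi (A i \ C0) with hw_def
  set τ : σ →₀ ℕ := ∑ i ∈ C0, tt i • chi (A i) with ht_def
  have hωl : ∀ l, ω l = ∑ i ∈ C0, tt i * chi (A i \ C0) l := by
    intro l
    rw [hw_def, Finset.sum_apply']
    refine Finset.sum_congr rfl fun i _ => ?_
    rw [Finsupp.smul_apply, smul_eq_mul]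
  have hτl : ∀ l, τ l = ∑ i ∈ C0, tt i * chi (A i) l := by
    intro l
    rw [ht_def, Finset.sum_apply']
    refine Finset.sum_congr rfl fun i _ => ?_
    rw [Finsupp.smul_apply, smul_eq_mul]
  have hω0 : ∀ l ∈ C0, ω l = 0 := by
    intro l hl
    rw [hωl]
    refine Finset.sum_eq_zero fun i _ => ?_
    rw [chi_apply, if_neg (fun hmem => (Finset.mem_sdiff.mp hmem).2 hl), mul_zero]
  have hτle : τ ≤ ω + e := by
    rw [Finsupp.le_def]
    intro l
    rw [Finsupp.add_apply]
    by_cases hl : l ∈ C0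
    · have h1 : τ l = tt l * chi (A l) l := by
        rw [hτl]
        refine Finset.sum_eq_single_of_mem l hl fun i hi hne => ?_
        rw [chi_apply, if_neg, mul_zero]
        intro hmem
        have hin : l ∈ A i ∩ C0 := Finset.mem_inter.mpr ⟨hmem, hl⟩
        rw [(hA i hi).2] at hin
        exact hne (Finset.mem_singleton.mp hin).symm
      have h2 : chi (A l) l ≤ 1 := by
        rw [chi_apply]; split <;> omega
      have h3 : tt l ≤ e l := httle l
      have h4 : τ l ≤ tt l := by
        rw [h1]
        calc tt l * chi (A l) l ≤ tt l * 1 := Nat.mul_le_mul (le_refl _) h2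
          _ = tt l := Nat.mul_one _
      omega
    · have h1 : τ l = ω l := by
        rw [hτl, hωl]
        refine Finset.sum_congr rfl fun i _ => ?_
        congr 1
        simp [chi_apply, Finset.mem_sdiff, hl]
      omega
  have hτmem : monomial τ (1 : K) ∈ (idealOf (K := K) E) ^ t := by
    have heq : monomial τ (1 : K) = ∏ i ∈ C0, (monomial (chi (A i)) (1 : K)) ^ tt i := by
      have h1 : ∏ i ∈ C0, (monomial (chi (A i)) (1 : K)) ^ tt i
          = ∏ i ∈ C0, monomial (tt i • chi (A i)) (1 : K) := by
        refine Finset.prod_congr rfl fun i _ => ?_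
        rw [monomial_pow, one_pow]
      rw [h1, prod_monomial, ht_def]
    rw [heq, ← httsum]
    refine prod_pow_mem _ _ C0 _ fun i hi => ?_
    rw [← prod_X_eq]
    exact Ideal.subset_span ⟨A i, Finset.mem_coe.mpr (hA i hi).1, rfl⟩
  refine ⟨ω, hω0, ?_⟩
  rw [monomial_mul, one_mul]
  have heq2 : monomial (ω + e) (1 : K) = monomial τ 1 * monomial (ω + e - τ) 1 := by
    rw [monomial_mul, one_mul, add_tsub_cancel_of_le hτle]
  rw [heq2]
  exact Ideal.mul_mem_right _ _ hτmem

theorem ass_eq_PC {E : Finset (Finset σ)} {q : Ideal (MvPolynomial σ K)}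
    (hq : q ∈ associatedPrimes (MvPolynomial σ K)
      (MvPolynomial σ K ⧸ (idealOf (K := K) E))) :
    ∃ C : Finset σ, MinCover E C ∧ q = PC C := by
  classical
  obtain ⟨hprime, x, hx⟩ := isAssociatedPrime_iff.mp hq
  obtain ⟨u, rfl⟩ := Submodule.Quotient.mk_surjective _ x
  have hmem : ∀ r : MvPolynomial σ K, r ∈ q ↔ r * u ∈ idealOf (K := K) E := by
    intro r
    rw [hx, Submodule.mem_colon_singleton, Submodule.mem_bot, ← Submodule.Quotient.mk_smul,
      smul_eq_mul, Submodule.Quotient.mk_eq_zero]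
  have hu : u ∉ (idealOf (K := K) E : Ideal (MvPolynomial σ K)) := by
    intro h
    exact hprime.ne_top ((Ideal.eq_top_iff_one _).mpr ((hmem 1).mpr (by rwa [one_mul])))
  set T : Finset (Finset σ) := Finset.univ.filter
    (fun C => IsCover E C ∧ u ∉ (PC C : Ideal (MvPolynomial σ K))) with hT
  have hqinf : ∀ r : MvPolynomial σ K,
      r ∈ q ↔ ∀ C ∈ T, r ∈ (PC C : Ideal (MvPolynomial σ K)) := by
    intro r
    rw [hmem, mem_idealOf_iff_forall_cover]
    constructor
    · intro h C hC
      rw [hT, Finset.mem_filter] at hC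
      rcases (PC_prime C).mem_or_mem (h C hC.2.1) with h' | h'
      · exact h'
      · exact absurd h' hC.2.2
    · intro h C hcov
      by_cases hu' : u ∈ (PC C : Ideal (MvPolynomial σ K))
      · exact Ideal.mul_mem_left _ _ hu'
      · refine Ideal.mul_mem_right _ _ (h C ?_)
        rw [hT, Finset.mem_filter]
        exact ⟨Finset.mem_univ _, hcov, hu'⟩
  have hq_eq : q = T.inf (fun C => PC (K := K) C) := by
    ext r
    rw [hqinf r, Submodule.mem_finsetInf]
  obtain ⟨C0, hC0T, hle⟩ := (Ideal.IsPrime.inf_le' hprime).mp (le_of_eq hq_eq.symm)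
  have hqle : q ≤ PC C0 := le_of_eq hq_eq |>.trans (Finset.inf_le hC0T)
  have hqPC : q = PC C0 := le_antisymm hqle hle
  rw [hT, Finset.mem_filter] at hC0T
  obtain ⟨-, hC0cov, hC0u⟩ := hC0T
  refine ⟨C0, ⟨hC0cov, ?_⟩, hqPC⟩
  intro i hi hcov_erase
  have h1 : u ∉ (PC (C0.erase i) : Ideal (MvPolynomial σ K)) := fun h =>
    hC0u (PC_mono (Finset.erase_subset i C0) h)
  have h2 : C0.erase i ∈ T := by
    rw [hT, Finset.mem_filter]
    exact ⟨Finset.mem_univ _, hcov_erase, h1⟩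
  have h3 : q ≤ PC (C0.erase i) := le_of_eq hq_eq |>.trans (Finset.inf_le h2)
  have h4 : (X i : MvPolynomial σ K) ∈ q := hqPC ▸ X_mem_PC.mpr hi
  have h5 : i ∈ C0.erase i := X_mem_PC.mp (h3 h4)
  exact Finset.notMem_erase i C0 h5

theorem ntf_mem {E : Finset (Finset σ)}
    (hntf : IsNTF (idealOf (K := K) E))
    {s' : ℕ} (hs' : 1 ≤ s') {e : σ →₀ ℕ}
    (h : ∀ C : Finset σ, MinCover E C → s' ≤ ∑ i ∈ C, e i) :
    monomial e (1 : K) ∈ (idealOf (K := K) E) ^ s' := by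
  classical
  by_contra hmem
  have hx : (Submodule.Quotient.mk (monomial e (1 : K)) :
      MvPolynomial σ K ⧸ ((idealOf (K := K) E) ^ s' : Ideal (MvPolynomial σ K))) ≠ 0 := by
    rw [Ne, Submodule.Quotient.mk_eq_zero]
    exact hmem
  obtain ⟨q, hqass, hqle⟩ := exists_le_isAssociatedPrime_of_isNoetherianRing (MvPolynomial σ K) _ hx
  have hqass' : q ∈ associatedPrimes (MvPolynomial σ K)
      (MvPolynomial σ K ⧸ ((idealOf (K := K) E) ^ s' : Ideal (MvPolynomial σ K))) := hqass
  have hq' : q ∈ associatedPrimes (MvPolynomial σ K)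
      (MvPolynomial σ K ⧸ (idealOf (K := K) E : Ideal (MvPolynomial σ K))) := hntf s' hs' hqass'
  obtain ⟨C0, hC0min, rfl⟩ := ass_eq_PC hq'
  obtain ⟨ω, hω0, hωmem⟩ := exists_witness (K := K) hC0min (h C0 hC0min)
  have hω_in : monomial ω (1 : K) ∈ (PC C0 : Ideal (MvPolynomial σ K)) := by
    apply hqle
    rw [Submodule.mem_colon_singleton, Submodule.mem_bot, ← Submodule.Quotient.mk_smul, smul_eq_mul,
      Submodule.Quotient.mk_eq_zero]
    exact hωmem
  rw [mem_PC] at hω_in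
  obtain ⟨l, hl, hne⟩ := hω_in ω
    (by rw [support_monomial, if_neg one_ne_zero]; exact Finset.mem_singleton_self ω)
  exact hne (hω0 l hl)


theorem PC_mem_minimalPrimes {E : Finset (Finset σ)} {C : Finset σ} (h : MinCover E C) :
    (PC C : Ideal (MvPolynomial σ K)) ∈ (idealOf (K := K) E).minimalPrimes := by
  classical
  constructor
  · exact ⟨PC_prime C, idealOf_le_PC h.1⟩
  · rintro q ⟨hqprime, hqJ⟩ hqle
    have hCq : IsCover E (C.filter (fun i => (X i : MvPolynomial σ K) ∈ q)) := by
      intro A hA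
      have hgen : (fun A => ∏ i ∈ A, (X i : MvPolynomial σ K)) A ∈ idealOf (K := K) E :=
        Ideal.subset_span ⟨A, Finset.mem_coe.mpr hA, rfl⟩
      have hprod : (∏ i ∈ A, (X i : MvPolynomial σ K)) ∈ q := hqJ hgen
      haveI := hqprime
      obtain ⟨i, hiA, hiq⟩ := Ideal.IsPrime.prod_mem_iff.mp hprod
      have hiC : i ∈ C := X_mem_PC.mp (hqle hiq)
      exact ⟨i, hiA, Finset.mem_filter.mpr ⟨hiC, hiq⟩⟩
    have hfil : C.filter (fun i => (X i : MvPolynomial σ K) ∈ q) = C := by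
      by_contra hne
      have hsub : C.filter (fun i => (X i : MvPolynomial σ K) ∈ q) ⊆ C :=
        Finset.filter_subset _ _
      obtain ⟨i, hiC, hinot⟩ := Finset.exists_of_ssubset (hsub.ssubset_of_ne hne)
      have hcov : IsCover E (C.erase i) := by
        refine isCover_mono (fun l hl => Finset.mem_erase.mpr ⟨?_, hsub hl⟩) hCq
        rintro rfl
        exact hinot hl
      exact h.2 i hiC hcov
    rw [PC, Ideal.span_le]
    rintro _ ⟨i, hi, rfl⟩
    have hmem : i ∈ C.filter (fun i => (X i : MvPolynomial σ K) ∈ q) := by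
      rw [hfil]
      exact Finset.mem_coe.mp hi
    exact (Finset.mem_filter.mp hmem).2

end Stmt13Aux

open Stmt13Aux

/- `I ⊆ R = K[x_1,…,x_n]` is the square-free monomial ideal with minimal generating set
`G(I) = {u_0, …, u_m}`, `u_j = ∏_{i ∈ U j} x_i` (the antichain condition guarantees that
these square-free monomials are precisely the minimal generators).  `S = K[x_1,…,x_{n+m+1}]`
adds one new variable for each generator, `f = ∏_{i ∈ F} x_i` divides the last generator,
and `L = (u_0, …, u_{m-1})S + f·x_{n+1}⋯x_{n+m+1}·S`. -/
theorem stmt_13 {K : Type*} [Field K] {n m : ℕ}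
    (U : Fin (m + 1) → Finset (Fin n))
    (hU : ∀ j k : Fin (m + 1), j ≠ k → ¬ U j ⊆ U k)
    (hNTF : IsNTF (Ideal.span
      (Set.range fun j : Fin (m + 1) => ∏ i ∈ U j, (X i : MvPolynomial (Fin n) K))))
    (F : Finset (Fin n)) (hF : F ⊆ U (Fin.last m))
    (J : Ideal (MvPolynomial (Fin (n + (m + 1))) K))
    (hJ : J = Ideal.span {f : MvPolynomial (Fin (n + (m + 1))) K |
      ∃ j : Fin (m + 1), j ≠ Fin.last m ∧ f = ∏ i ∈ U j, X (Fin.castAdd (m + 1) i)})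
    (v : MvPolynomial (Fin (n + (m + 1))) K)
    (hv : v = (∏ i ∈ F, X (Fin.castAdd (m + 1) i)) * ∏ j : Fin (m + 1), X (Fin.natAdd n j))
    (L : Ideal (MvPolynomial (Fin (n + (m + 1))) K))
    (hL : L = J + Ideal.span {v})
    (hvp : ∀ p ∈ L.minimalPrimes, v ∉ p ^ 2)
    (hJNTF : IsNTF J) :
    (∀ s : ℕ, 1 ≤ s → ∀ d : Fin (n + (m + 1)) →₀ ℕ,
      (∃ k : ℕ, 1 ≤ k ∧ (monomial d (1 : K)) ^ k ∈ L ^ (s * k)) →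
      monomial d (1 : K) ∈ L ^ s) := by
  classical
  intro s hs d hd
  obtain ⟨k, hk, hmemk⟩ := hd
  -- notation
  set em : Fin n → Fin (n + (m + 1)) := Fin.castAdd (m + 1) with hem
  have hem_inj : Function.Injective em := Fin.castAdd_injective _ _
  have hna_inj : Function.Injective (Fin.natAdd n : Fin (m+1) → Fin (n + (m+1))) := by
    intro a b hab
    have := congrArg Fin.val hab
    simp only [Fin.coe_natAdd] at this
    exact Fin.ext (by omega)
  set U' : Fin (m + 1) → Finset (Fin (n + (m + 1))) := fun j => (U j).image em with hU'
  set EJ : Finset (Finset (Fin (n + (m + 1)))) :=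
    (Finset.univ.filter (fun j : Fin (m + 1) => j ≠ Fin.last m)).image U' with hEJ
  set sv : Finset (Fin (n + (m + 1))) :=
    F.image em ∪ Finset.univ.image (Fin.natAdd n) with hsv
  set EL : Finset (Finset (Fin (n + (m + 1)))) := insert sv EJ with hEL
  have hprodU : ∀ j, (∏ i ∈ U' j, (X i : MvPolynomial (Fin (n + (m + 1))) K))
      = ∏ i ∈ U j, X (em i) := fun j =>
    Finset.prod_image (fun a _ b _ hab => hem_inj hab)
  have hJ' : J = idealOf (K := K) EJ := by
    rw [hJ, idealOf]
    congr 1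
    ext f
    constructor
    · rintro ⟨j, hj, rfl⟩
      exact ⟨U' j, Finset.mem_coe.mpr (Finset.mem_image.mpr
        ⟨j, Finset.mem_filter.mpr ⟨Finset.mem_univ _, hj⟩, rfl⟩), hprodU j⟩
    · rintro ⟨A, hA, rfl⟩
      obtain ⟨j, hjf, rfl⟩ := Finset.mem_image.mp (Finset.mem_coe.mp hA)
      exact ⟨j, (Finset.mem_filter.mp hjf).2, hprodU j⟩
  have hdisj : Disjoint (F.image em) (Finset.univ.image (Fin.natAdd n : Fin (m+1) → _)) := by
    rw [Finset.disjoint_left]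
    rintro a ha hb
    obtain ⟨i, _, rfl⟩ := Finset.mem_image.mp ha
    obtain ⟨j, _, hji⟩ := Finset.mem_image.mp hb
    have h2 := congrArg Fin.val hji
    simp only [Fin.coe_natAdd, hem, Fin.coe_castAdd] at h2
    have := i.isLt
    omega
  have hv' : v = ∏ i ∈ sv, (X i : MvPolynomial (Fin (n + (m + 1))) K) := by
    rw [hv, hsv, Finset.prod_union hdisj]
    congr 1
    · exact (Finset.prod_image (fun a _ b _ hab => hem_inj hab)).symm
    · exact (Finset.prod_image (fun a _ b _ hab => hna_inj hab)).symm
  have hvm : v = monomial (chi sv) 1 := by rw [hv', prod_X_eq]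
  have hL' : L = idealOf (K := K) EL := by
    rw [hL, hJ', hEL, idealOf, idealOf, Finset.coe_insert, Set.image_insert_eq,
      Ideal.span_insert, ← hv', Submodule.add_eq_sup, sup_comm]
  -- v ∈ L
  have hvL : v ∈ L := by
    rw [hL]
    exact Submodule.mem_sup_right (Ideal.mem_span_singleton_self v)
  -- J ≤ L
  have hJL : J ≤ L := by
    rw [hL]
    exact le_sup_left
  -- Lemma A: any cover of EL gives a lower bound on the degree sum
  have hcovsum : ∀ C : Finset (Fin (n + (m + 1))), IsCover EL C → s ≤ ∑ i ∈ C, d i := by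
    intro C hC
    have h1 : (monomial d (1 : K)) ^ k ∈ (idealOf (K := K) EL) ^ (s * k) := by
      rw [← hL']
      exact hmemk
    have h2 := cover_sum_ge hC (Nat.lt_of_lt_of_le Nat.zero_lt_one hk) h1
    have h3 : k * s ≤ k * ∑ i ∈ C, d i := by
      rw [mul_comm k s] at *
      omega
    exact Nat.le_of_mul_le_mul_left h3 (Nat.lt_of_lt_of_le Nat.zero_lt_one hk)
  -- minimum of d over the support of v
  have hsvne : sv.Nonempty :=
    ⟨Fin.natAdd n 0, Finset.mem_union_right _ (Finset.mem_image.mpr ⟨0, Finset.mem_univ _, rfl⟩)⟩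
  obtain ⟨w0, hw0sv, hw0min⟩ := Finset.exists_min_image sv (fun i => d i) hsvne
  set b : ℕ := d w0 with hb
  by_cases hcase : s ≤ b
  · -- v^s divides the monomial
    have hle : s • chi sv ≤ d := by
      rw [Finsupp.le_def]
      intro l
      rw [Finsupp.smul_apply, smul_eq_mul, chi_apply]
      by_cases hl : l ∈ sv
      · rw [if_pos hl, mul_one]
        exact hcase.trans (hw0min l hl)
      · rw [if_neg hl, mul_zero]
        exact Nat.zero_le _
    have heq : monomial d (1 : K) = v ^ s * monomial (d - s • chi sv) 1 := by
      rw [hvm, monomial_pow, one_pow, monomial_mul, one_mul, add_tsub_cancel_of_le hle]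
    rw [heq]
    exact Ideal.mul_mem_right _ _ (Ideal.pow_mem_pow hvL s)
  · -- main case
    push_neg at hcase
    set e : (Fin (n + (m + 1))) →₀ ℕ := d - b • chi sv with he_def
    have hel : ∀ l, e l = d l - b * chi sv l := by
      intro l
      rw [he_def, Finsupp.tsub_apply, Finsupp.smul_apply, smul_eq_mul]
    have hble : ∀ l ∈ sv, b ≤ d l := fun l hl => hw0min l hl
    have hEJNTF : IsNTF (idealOf (K := K) EJ) := by rw [← hJ']; exact hJNTF
    -- bound for all minimal covers of EJ
    have happ : ∀ C : Finset (Fin (n + (m + 1))), MinCover EJ C → s - b ≤ ∑ i ∈ C, e i := by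
      intro C hC
      by_cases hint : (C ∩ sv).Nonempty
      · -- C is a minimal cover of EL
        have hCov : IsCover EL C := by
          intro A hA
          rcases Finset.mem_insert.mp hA with rfl | hA'
          · obtain ⟨a, ha⟩ := hint
            obtain ⟨haC, hasv⟩ := Finset.mem_inter.mp ha
            exact ⟨a, hasv, haC⟩
          · exact hC.1 A hA'
        have hMin : MinCover EL C := by
          refine ⟨hCov, fun i hi hcov => hC.2 i hi (fun A hA => hcov A ?_)⟩
          exact Finset.mem_insert_of_mem hA
        -- hvp gives that C meets sv exactly once
        have hvnotin : v ∉ (PC C : Ideal (MvPolynomial (Fin (n + (m + 1))) K)) ^ 2 := by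
          apply hvp
          rw [hL]
          rw [← hL]
          rw [hL']
          exact PC_mem_minimalPrimes hMin
        have huniq : ∀ a ∈ C ∩ sv, ∀ a' ∈ C ∩ sv, a = a' := by
          intro a ha a' ha'
          by_contra hne
          apply hvnotin
          rw [PC_eq_mdl, mdl_pow, hvm]
          rw [mem_mdl]
          intro dd hdd
          rw [support_monomial, if_neg one_ne_zero, Finset.mem_singleton] at hdd
          subst hdd
          refine ⟨Finsupp.single a 1 + (Finsupp.single a' 1 + 0), ?_, ?_⟩
          · refine Set.add_mem_add ⟨a, Finset.mem_coe.mpr (Finset.mem_inter.mp ha).1, rfl⟩ ?_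
            refine Set.add_mem_add ⟨a', Finset.mem_coe.mpr (Finset.mem_inter.mp ha').1, rfl⟩ ?_
            rfl
          · rw [Finsupp.le_def]
            intro l
            rw [add_zero, Finsupp.add_apply, chi_apply, Finsupp.single_apply,
              Finsupp.single_apply]
            have hasv := (Finset.mem_inter.mp ha).2
            have hasv' := (Finset.mem_inter.mp ha').2
            by_cases h1 : a = l
            · rw [if_pos h1, if_neg (fun h2 => hne (h1.trans h2.symm)), if_pos (h1 ▸ hasv)]
              omega
            · rw [if_neg h1]
              by_cases h2 : a' = l
              · rw [if_pos h2, if_pos (h2 ▸ hasv')]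
              · rw [if_neg h2]
                split <;> omega
        obtain ⟨a, ha⟩ := hint
        have haC := (Finset.mem_inter.mp ha).1
        have hasv := (Finset.mem_inter.mp ha).2
        have hsum_e : (∑ i ∈ C, e i) + b = ∑ i ∈ C, d i := by
          have h1 : ∑ i ∈ C, e i = e a + ∑ i ∈ C.erase a, e i :=
            (Finset.add_sum_erase _ _ haC).symm
          have h2 : ∑ i ∈ C, d i = d a + ∑ i ∈ C.erase a, d i :=
            (Finset.add_sum_erase _ _ haC).symm
          have h3 : ∀ i ∈ C.erase a, e i = d i := by
            intro i hi
            have hisv : i ∉ sv := by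
              intro hmem
              have : i = a := huniq i (Finset.mem_inter.mpr
                ⟨Finset.mem_of_mem_erase hi, hmem⟩) a ha
              exact Finset.notMem_erase a C (this ▸ hi)
            rw [hel, chi_apply, if_neg hisv, mul_zero, Nat.sub_zero]
          have h4 : e a = d a - b := by
            rw [hel, chi_apply, if_pos hasv, mul_one]
          have h5 : b ≤ d a := hble a hasv
          have h3' : ∑ i ∈ C.erase a, e i = ∑ i ∈ C.erase a, d i := Finset.sum_congr rfl h3
          omega
        have h6 : s ≤ ∑ i ∈ C, d i := hcovsum C hCov
        omega
      · -- C is disjoint from sv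
        have hw0C : w0 ∉ C := by
          intro h
          exact hint ⟨w0, Finset.mem_inter.mpr ⟨h, hw0sv⟩⟩
        have hCov : IsCover EL (insert w0 C) := by
          intro A hA
          rcases Finset.mem_insert.mp hA with rfl | hA'
          · exact ⟨w0, hw0sv, Finset.mem_insert_self _ _⟩
          · obtain ⟨i, hiA, hiC⟩ := hC.1 A hA'
            exact ⟨i, hiA, Finset.mem_insert_of_mem hiC⟩
        have h6 : s ≤ ∑ i ∈ insert w0 C, d i := hcovsum _ hCov
        have h8 : ∑ i ∈ insert w0 C, d i = d w0 + ∑ i ∈ C, d i := Finset.sum_insert hw0C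
        have h7 : ∀ i ∈ C, e i = d i := by
          intro i hi
          have hisv : i ∉ sv := fun hmem => hint ⟨i, Finset.mem_inter.mpr ⟨hi, hmem⟩⟩
          rw [hel, chi_apply, if_neg hisv, mul_zero, Nat.sub_zero]
        have h7' : ∑ i ∈ C, e i = ∑ i ∈ C, d i := Finset.sum_congr rfl h7
        omega
    have hJm : monomial e (1 : K) ∈ (idealOf (K := K) EJ) ^ (s - b) :=
      ntf_mem hEJNTF (by omega) happ
    -- reassemble
    have hsplit : b • chi sv + e = d := by
      ext l
      rw [Finsupp.add_apply, Finsupp.smul_apply, smul_eq_mul, hel, chi_apply]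
      by_cases hl : l ∈ sv
      · rw [if_pos hl]
        have := hble l hl
        omega
      · rw [if_neg hl]
        omega
    have heq : monomial d (1 : K) = v ^ b * monomial e 1 := by
      rw [hvm, monomial_pow, one_pow, monomial_mul, one_mul, hsplit]
    rw [heq]
    have h8 : v ^ b ∈ L ^ b := Ideal.pow_mem_pow hvL b
    have h9 : monomial e (1 : K) ∈ L ^ (s - b) := by
      refine Ideal.pow_right_mono ?_ _ hJm
      rw [← hJ']
      exact hJL
    have h10 : v ^ b * monomial e (1 : K) ∈ L ^ b * L ^ (s - b) := Ideal.mul_mem_mul h8 h9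
    have h11 : L ^ b * L ^ (s - b) = L ^ s := by
      rw [← pow_add]
      congr 1
      omega
    rw [← h11]
    exact h10
end

section
/- Let K be a field and R = K[x,y,z]. Let J = (x^3, x^2z, xz^2, yz^3) ⊆ R. Then for every integer s ≥ 1, J^s = (x,y)^s ∩ (x,z)^{3s}. -/
open MvPolynomial

/-- Powers of `(X i, X j)` are contained in the span of monomials with `μ i + μ j` big. -/
lemma aux_pow_le {K : Type*} [Field K] (i j : Fin 3) (n : ℕ) :
    (Ideal.span {(X i : MvPolynomial (Fin 3) K), X j}) ^ n ≤
      Ideal.span ((fun μ => monomial μ (1 : K)) '' {μ | n ≤ μ i + μ j}) := by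
  induction n with
  | zero =>
    rw [pow_zero, Ideal.one_eq_top, top_le_iff, Ideal.eq_top_iff_one]
    exact Ideal.subset_span ⟨0, by simp, by simp⟩
  | succ n ih =>
    rw [pow_succ]
    refine le_trans (Ideal.mul_mono ih le_rfl) ?_
    rw [Ideal.span, Ideal.span, Submodule.span_mul_span, ← Ideal.span]
    refine Ideal.span_le.2 ?_
    rintro p hp
    rw [Set.mem_mul] at hp
    obtain ⟨q, ⟨μ, hμ, rfl⟩, r, hr, rfl⟩ := hp
    have hXk : ∀ k : Fin 3, (k = i ∨ k = j) →
        monomial μ (1:K) * X k ∈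
          Ideal.span ((fun μ => monomial μ (1 : K)) '' {μ | n + 1 ≤ μ i + μ j}) := by
      intro k hk
      apply Ideal.subset_span
      refine ⟨μ + Finsupp.single k 1, ?_, ?_⟩
      · simp only [Set.mem_setOf_eq, Finsupp.add_apply, Finsupp.single_apply]
        rcases hk with rfl | rfl <;> simp_all <;> omega
      · rw [X, monomial_mul, mul_one]
    rcases hr with rfl | rfl
    · exact hXk i (Or.inl rfl)
    · exact hXk j (Or.inr rfl)

lemma aux_monomial_eq {K : Type*} [Field K] (μ : Fin 3 →₀ ℕ) :
    monomial μ (1 : K) = X 0 ^ μ 0 * X 1 ^ μ 1 * X 2 ^ μ 2 := by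
  rw [monomial_eq, Finsupp.prod_pow, Fin.prod_univ_three, map_one, one_mul]

/-- Every monomial with `μ 0 + μ 1 ≥ s` and `μ 0 + μ 2 ≥ 3s` is in `J ^ s`. -/
lemma aux_mem_pow {K : Type*} [Field K] (s : ℕ) (μ : Fin 3 →₀ ℕ)
    (h1 : s ≤ μ 0 + μ 1) (h2 : 3 * s ≤ μ 0 + μ 2) :
    monomial μ (1 : K) ∈ (Ideal.span {(X 0 : MvPolynomial (Fin 3) K) ^ 3, X 0 ^ 2 * X 2,
        X 0 * X 2 ^ 2, X 1 * X 2 ^ 3}) ^ s := by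
  set J : Ideal (MvPolynomial (Fin 3) K) :=
    Ideal.span {(X 0 : MvPolynomial (Fin 3) K) ^ 3, X 0 ^ 2 * X 2, X 0 * X 2 ^ 2, X 1 * X 2 ^ 3}
    with hJ
  have key : ∃ m3 m2 m1 m0, m3+m2+m1+m0 = s ∧ 3*m3+2*m2+m1 ≤ μ 0 ∧ m0 ≤ μ 1 ∧
      m2+2*m1+3*m0 ≤ μ 2 := by
    set a := μ 0; set b := μ 1; set c := μ 2
    refine ⟨min a (3*s) - 2 * max (s - b) ((min a (3*s) + 2)/3),
      min (min a (3*s) - max (s - b) ((min a (3*s) + 2)/3))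
        (3 * max (s - b) ((min a (3*s) + 2)/3) - min a (3*s)),
      2 * max (s - b) ((min a (3*s) + 2)/3) - min a (3*s),
      s - max (s - b) ((min a (3*s) + 2)/3), ?_, ?_, ?_, ?_⟩ <;> omega
  obtain ⟨m3, m2, m1, m0, hsum, hx, hy, hz⟩ := key
  obtain ⟨a', ha⟩ : ∃ a', μ 0 = a' + (3*m3+2*m2+m1) := ⟨μ 0 - (3*m3+2*m2+m1), by omega⟩
  obtain ⟨b', hb⟩ : ∃ b', μ 1 = b' + m0 := ⟨μ 1 - m0, by omega⟩
  obtain ⟨c', hc⟩ : ∃ c', μ 2 = c' + (m2+2*m1+3*m0) := ⟨μ 2 - (m2+2*m1+3*m0), by omega⟩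
  have hP : ((X 0:MvPolynomial (Fin 3) K)^3)^m3 * (X 0^2*X 2)^m2 * (X 0*X 2^2)^m1 *
      (X 1*X 2^3)^m0 ∈ J ^ s := by
    have h3 : (X 0:MvPolynomial (Fin 3) K)^3 ∈ J := Ideal.subset_span (by simp)
    have h2' : (X 0:MvPolynomial (Fin 3) K)^2*X 2 ∈ J := Ideal.subset_span (by simp)
    have h1' : (X 0:MvPolynomial (Fin 3) K)*X 2^2 ∈ J := Ideal.subset_span (by simp)
    have h0 : (X 1:MvPolynomial (Fin 3) K)*X 2^3 ∈ J := Ideal.subset_span (by simp)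
    have := Ideal.mul_mem_mul (Ideal.mul_mem_mul
      (Ideal.mul_mem_mul (Ideal.pow_mem_pow h3 m3) (Ideal.pow_mem_pow h2' m2))
      (Ideal.pow_mem_pow h1' m1)) (Ideal.pow_mem_pow h0 m0)
    rwa [← pow_add, ← pow_add, ← pow_add, hsum] at this
  have heq : monomial μ (1 : K) = (X 0 ^ a' * X 1 ^ b' * X 2 ^ c') *
      (((X 0:MvPolynomial (Fin 3) K)^3)^m3 * (X 0^2*X 2)^m2 * (X 0*X 2^2)^m1 *
        (X 1*X 2^3)^m0) := by
    rw [aux_monomial_eq, ha, hb, hc]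
    ring
  rw [heq]
  exact Ideal.mul_mem_left _ _ hP

/-- `x = X 0`, `y = X 1`, `z = X 2` in `R = K[x,y,z]`. -/
theorem stmt_16 {K : Type*} [Field K] (s : ℕ) (hs : 1 ≤ s) :
    (Ideal.span {(X 0 : MvPolynomial (Fin 3) K) ^ 3, X 0 ^ 2 * X 2,
        X 0 * X 2 ^ 2, X 1 * X 2 ^ 3}) ^ s =
      (Ideal.span {(X 0 : MvPolynomial (Fin 3) K), X 1}) ^ s ⊓
        (Ideal.span {(X 0 : MvPolynomial (Fin 3) K), X 2}) ^ (3 * s) := by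
  set J : Ideal (MvPolynomial (Fin 3) K) :=
    Ideal.span {(X 0 : MvPolynomial (Fin 3) K) ^ 3, X 0 ^ 2 * X 2, X 0 * X 2 ^ 2, X 1 * X 2 ^ 3}
  set I1 : Ideal (MvPolynomial (Fin 3) K) := Ideal.span {X 0, X 1}
  set I2 : Ideal (MvPolynomial (Fin 3) K) := Ideal.span {X 0, X 2}
  have hx1 : (X 0 : MvPolynomial (Fin 3) K) ∈ I1 := Ideal.subset_span (by simp)
  have hy1 : (X 1 : MvPolynomial (Fin 3) K) ∈ I1 := Ideal.subset_span (by simp)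
  have hx2 : (X 0 : MvPolynomial (Fin 3) K) ∈ I2 := Ideal.subset_span (by simp)
  have hz2 : (X 2 : MvPolynomial (Fin 3) K) ∈ I2 := Ideal.subset_span (by simp)
  refine le_antisymm (le_inf ?_ ?_) ?_
  · -- J ^ s ≤ I1 ^ s
    refine Ideal.pow_right_mono (Ideal.span_le.2 ?_) s
    rintro p hp
    simp only [Set.mem_insert_iff, Set.mem_singleton_iff] at hp
    rcases hp with rfl | rfl | rfl | rfl
    · exact (show (X 0:MvPolynomial (Fin 3) K)^3 = X 0^2 * X 0 by ring) ▸
        Ideal.mul_mem_left _ _ hx1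
    · exact (show (X 0:MvPolynomial (Fin 3) K)^2*X 2 = (X 0 * X 2) * X 0 by ring) ▸
        Ideal.mul_mem_left _ _ hx1
    · exact (show (X 0:MvPolynomial (Fin 3) K)*X 2^2 = X 2^2 * X 0 by ring) ▸
        Ideal.mul_mem_left _ _ hx1
    · exact (show (X 1:MvPolynomial (Fin 3) K)*X 2^3 = X 2^3 * X 1 by ring) ▸
        Ideal.mul_mem_left _ _ hy1
  · -- J ^ s ≤ I2 ^ (3s)
    have hJ3 : J ≤ I2 ^ 3 := by
      refine Ideal.span_le.2 ?_
      have h33 : I2 ^ 3 = I2 * I2 * I2 := by rw [pow_succ, pow_succ, pow_one]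
      rintro p hp
      simp only [Set.mem_insert_iff, Set.mem_singleton_iff] at hp
      rcases hp with rfl | rfl | rfl | rfl
      · exact Ideal.pow_mem_pow hx2 3
      · rw [SetLike.mem_coe, h33]
        exact (show (X 0:MvPolynomial (Fin 3) K)^2*X 2 = X 0 * X 0 * X 2 by ring) ▸
          Ideal.mul_mem_mul (Ideal.mul_mem_mul hx2 hx2) hz2
      · rw [SetLike.mem_coe, h33]
        exact (show (X 0:MvPolynomial (Fin 3) K)*X 2^2 = X 0 * X 2 * X 2 by ring) ▸
          Ideal.mul_mem_mul (Ideal.mul_mem_mul hx2 hz2) hz2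
      · exact Ideal.mul_mem_left _ (X 1) (Ideal.pow_mem_pow hz2 3)
    calc J ^ s ≤ (I2 ^ 3) ^ s := Ideal.pow_right_mono hJ3 s
    _ = I2 ^ (3 * s) := by rw [← pow_mul]
  · -- hard direction
    rintro f ⟨hf1, hf2⟩
    have hm1 := mem_ideal_span_monomial_image.1 (aux_pow_le 0 1 s hf1)
    have hm2 := mem_ideal_span_monomial_image.1 (aux_pow_le 0 2 (3 * s) hf2)
    rw [f.as_sum]
    refine Ideal.sum_mem _ fun μ hμ => ?_
    obtain ⟨ν1, hν1, hle1⟩ := hm1 μ hμ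
    obtain ⟨ν2, hν2, hle2⟩ := hm2 μ hμ
    have h1 : s ≤ μ 0 + μ 1 :=
      le_trans hν1 (add_le_add (hle1 0) (hle1 1))
    have h2 : 3 * s ≤ μ 0 + μ 2 :=
      le_trans hν2 (add_le_add (hle2 0) (hle2 2))
    have : monomial μ (f.coeff μ) = C (f.coeff μ) * monomial μ 1 := by
      rw [C_mul_monomial, mul_one]
    rw [this]
    exact Ideal.mul_mem_left _ _ (aux_mem_pow s μ h1 h2)
end

section
/- Let K be a field, R = K[x_1,…,x_6], and let I = (x_1x_3x_5, x_1x_3x_4, x_1x_2x_4, x_2x_4x_5x_6, x_2x_3x_5x_6) ⊆ R. Then for every integer t ≥ 2, the monomial x_1^{t−1} x_2 x_3^{t−1} x_4 x_5^{t−1} x_6 does not belong to I^t. -/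
open MvPolynomial

/-- `x_i = X (i-1)` in `R = K[x_1,…,x_6]`. -/
theorem stmt_18 {K : Type*} [Field K] (t : ℕ) (ht : 2 ≤ t) :
    (X 0 : MvPolynomial (Fin 6) K) ^ (t - 1) * X 1 * X 2 ^ (t - 1) * X 3 * X 4 ^ (t - 1) * X 5 ∉
      (Ideal.span {(X 0 : MvPolynomial (Fin 6) K) * X 2 * X 4, X 0 * X 2 * X 3,
        X 0 * X 1 * X 3, X 1 * X 3 * X 4 * X 5, X 1 * X 2 * X 4 * X 5}) ^ t := by
  obtain ⟨s, rfl⟩ : ∃ s, t = s + 2 := ⟨t - 2, by omega⟩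
  intro hmem
  set φ : MvPolynomial (Fin 6) K →ₐ[K] Polynomial K :=
    aeval ![Polynomial.X, Polynomial.X ^ 2, Polynomial.X ^ 2, Polynomial.X ^ 2,
      Polynomial.X ^ 2, 1] with hφ
  have h5 : (![Polynomial.X, Polynomial.X ^ 2, Polynomial.X ^ 2, Polynomial.X ^ 2,
      Polynomial.X ^ 2, 1] : Fin 6 → Polynomial K) 5 = 1 := rfl
  have hI : Ideal.map (φ : MvPolynomial (Fin 6) K →+* Polynomial K)
      (Ideal.span {(X 0 : MvPolynomial (Fin 6) K) * X 2 * X 4, X 0 * X 2 * X 3,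
        X 0 * X 1 * X 3, X 1 * X 3 * X 4 * X 5, X 1 * X 2 * X 4 * X 5})
      ≤ Ideal.span {Polynomial.X ^ 5} := by
    rw [Ideal.map_span, Ideal.span_le]
    rintro p ⟨q, hq, rfl⟩
    simp only [Set.mem_insert_iff, Set.mem_singleton_iff] at hq
    rw [SetLike.mem_coe, Ideal.mem_span_singleton, dvd_iff_exists_eq_mul_left]
    rcases hq with rfl | rfl | rfl | rfl | rfl <;>
      · simp only [map_mul, AlgHom.coe_toRingHom, hφ, aeval_X, Matrix.cons_val_zero,
          Matrix.cons_val_one, Matrix.head_cons, Matrix.cons_val_two, Matrix.tail_cons,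
          Matrix.cons_val_three, Matrix.cons_val_four, Matrix.cons_val_fin_one, Matrix.cons_val_succ, h5]
        ring_nf
        first
          | exact ⟨_, (pow_mul_pow_sub _ (by norm_num)).symm⟩
          | exact ⟨Polynomial.X, by ring⟩
  have hmem2 : φ ((X 0 : MvPolynomial (Fin 6) K) ^ (s + 2 - 1) * X 1 * X 2 ^ (s + 2 - 1) * X 3
      * X 4 ^ (s + 2 - 1) * X 5) ∈ Ideal.span {Polynomial.X ^ 5} ^ (s + 2) := by
    have := Ideal.mem_map_of_mem (φ : MvPolynomial (Fin 6) K →+* Polynomial K) hmem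
    rw [Ideal.map_pow] at this
    exact Ideal.pow_right_mono hI _ this
  rw [Ideal.span_singleton_pow, Ideal.mem_span_singleton, ← pow_mul] at hmem2
  have heval : φ ((X 0 : MvPolynomial (Fin 6) K) ^ (s + 2 - 1) * X 1 * X 2 ^ (s + 2 - 1) * X 3
      * X 4 ^ (s + 2 - 1) * X 5) = Polynomial.X ^ (5 * s + 9) := by
    simp only [map_mul, map_pow, hφ, aeval_X, Matrix.cons_val_zero, Matrix.cons_val_one,
      Matrix.head_cons, Matrix.cons_val_two, Matrix.tail_cons, Matrix.cons_val_three,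
      Matrix.cons_val_four, Matrix.cons_val_fin_one, Matrix.cons_val_succ, h5]
    rw [show s + 2 - 1 = s + 1 from by omega, mul_one]
    ring
  rw [heval] at hmem2
  have hle := Polynomial.natDegree_le_of_dvd hmem2
    (pow_ne_zero _ (Polynomial.X_ne_zero (R := K)))
  rw [Polynomial.natDegree_X_pow, Polynomial.natDegree_X_pow] at hle
  omega
end
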